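/- The multiple-slot, budgets-only price-setting mechanism is truthful: for every bidder i with true budget B_i > 0 and every fixed declared budgets of the other bidders, declaring B̂_i = B_i yields utility for bidder i at least as large as that of any other declared budget B̂_i > 0. -/

import Mathlib

/-!
The multiple-slot, budgets-only price-setting (PS) mechanism.  There are `n`
bidders with declared budgets and `n` slots with click rates
`D 0 > D 1 > … > D (n-1) ≥ 0`.  The mechanism sorts the bidders by declared
budget (decreasing, ties broken by the fixed index order), repeatedly computes
`r ℓ = (Σ_{i≤ℓ} B̂_i)/(Σ_{i≤ℓ} D_i)`, sets the price `p = max_ℓ r ℓ`,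
allocates the largest maximizing prefix `ℓ*` of bidders to the top `ℓ*`
remaining slots at price `p` (so bidder `i` gets `B̂_i / p` clicks and spends
exactly `B̂_i`), and recurses on the remaining bidders and slots; if all
remaining slot rates are `0` everybody left gets `0` clicks.
-/

/-- 0-based rank of bidder `i` when sorting by `key`, decreasing, ties broken
by the fixed lexicographic (index) order. -/
noncomputable def rankBy (n : ℕ) (key : Fin n → ℝ) (i : Fin n) : ℕ :=
  (Finset.univ.filter (fun j => key i < key j ∨ (key j = key i ∧ j < i))).card

/-- Value of `f` at the bidder whose 0-based rank (by `key`) is `t`, or `0` if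
there is no such bidder. -/
noncomputable def atRank (n : ℕ) (key f : Fin n → ℝ) (t : ℕ) : ℝ :=
  if h : (Finset.univ.filter (fun i => rankBy n key i = t)).Nonempty
  then f ((Finset.univ.filter (fun i => rankBy n key i = t)).min' h)
  else 0

/-- The block price for (budget-sorted) budgets `Bs` and slot rates `Ds`:
`max_{1 ≤ ℓ ≤ |Bs|} (Σ_{i≤ℓ} B_i)/(Σ_{j≤ℓ} D_j)`. -/
noncomputable def psbPrice (Bs Ds : List ℝ) : ℝ :=
  if h : ((Finset.Icc 1 Bs.length).image
      (fun l => (Bs.take l).sum / (Ds.take l).sum)).Nonempty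
  then ((Finset.Icc 1 Bs.length).image
      (fun l => (Bs.take l).sum / (Ds.take l).sum)).max' h
  else 0

/-- The largest `ℓ` achieving the block price (defensive fallback `1`). -/
noncomputable def psbLstar (Bs Ds : List ℝ) : ℕ :=
  if h : ((Finset.Icc 1 Bs.length).filter
      (fun l => (Bs.take l).sum / (Ds.take l).sum = psbPrice Bs Ds)).Nonempty
  then ((Finset.Icc 1 Bs.length).filter
      (fun l => (Bs.take l).sum / (Ds.take l).sum = psbPrice Bs Ds)).max' h
  else 1

/-- One pass of the recursive PS mechanism on sorted budget and slot lists,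
with fuel for termination (fuel `= |Bs|` suffices since each block is
nonempty); returns the list of clicks in budget-sorted order. -/
noncomputable def psbAux : ℕ → List ℝ → List ℝ → List ℝ
  | 0, _, _ => []
  | fuel + 1, Bs, Ds =>
    if Bs = [] then []
    else if (Ds.take Bs.length).sum ≤ 0 then Bs.map (fun _ => 0)
    else
      (Bs.take (psbLstar Bs Ds)).map (fun Bv => Bv / psbPrice Bs Ds) ++
        psbAux fuel (Bs.drop (psbLstar Bs Ds)) (Ds.drop (psbLstar Bs Ds))

/-- Clicks in budget-sorted order. -/
noncomputable def psbList (Bs Ds : List ℝ) : List ℝ :=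
  psbAux Bs.length Bs Ds

/-- Clicks received by bidder `i` when the declared budgets are `bud` and the
slot rates are `D`. -/
noncomputable def psbClicks (n : ℕ) (D : Fin n → ℝ) (bud : Fin n → ℝ)
    (i : Fin n) : ℝ :=
  (psbList ((List.range n).map (atRank n bud bud))
      ((List.finRange n).map D)).getD (rankBy n bud i) 0

/-- Click-maximizing utility of bidder `i` with true budget `Btrue`: her
number of clicks provided her total payment (her declared budget, if she
receives any clicks) is at most `Btrue`, and `−∞` otherwise. -/
noncomputable def psbUtil (n : ℕ) (D : Fin n → ℝ) (Btrue : ℝ)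
    (bud : Fin n → ℝ) (i : Fin n) : EReal :=
  if psbClicks n D bud i = 0 ∨ bud i ≤ Btrue
  then (psbClicks n D bud i : EReal) else ⊥


namespace PSBProof
open Finset

open Finset

variable {n : ℕ}

noncomputable def bset (n : ℕ) (key : Fin n → ℝ) (i : Fin n) : Finset (Fin n) :=
  Finset.univ.filter (fun j => key i < key j ∨ (key j = key i ∧ j < i))

lemma rankBy_eq_card (key : Fin n → ℝ) (i : Fin n) : rankBy n key i = (bset n key i).card := rfl

lemma mem_bset {key : Fin n → ℝ} {i j : Fin n} :
    j ∈ bset n key i ↔ (key i < key j ∨ (key j = key i ∧ j < i)) := by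
  simp [bset]

lemma bset_ssubset {key : Fin n → ℝ} {i j : Fin n}
    (h : key i < key j ∨ (key j = key i ∧ j < i)) : bset n key j ⊂ bset n key i := by
  constructor
  · intro k hk
    rw [mem_bset] at hk ⊢
    rcases hk with h1 | ⟨h1, h2⟩
    · rcases h with h' | ⟨h', _⟩
      · exact Or.inl (h'.trans h1)
      · exact Or.inl (h' ▸ h1)
    · rcases h with h' | ⟨h', h''⟩
      · exact Or.inl (by rw [h1]; exact h')
      · exact Or.inr ⟨h1.trans h', h2.trans h''⟩
  · intro hsub
    have hj : j ∈ bset n key i := mem_bset.2 h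
    have hjj := hsub hj
    rw [mem_bset] at hjj
    rcases hjj with h1 | ⟨_, h2⟩
    · exact absurd h1 (lt_irrefl _)
    · exact absurd h2 (lt_irrefl _)

lemma rank_lt_rank {key : Fin n → ℝ} {i j : Fin n}
    (h : key i < key j ∨ (key j = key i ∧ j < i)) : rankBy n key j < rankBy n key i := by
  rw [rankBy_eq_card, rankBy_eq_card]
  exact card_lt_card (bset_ssubset h)

lemma rankBy_injective (key : Fin n → ℝ) : Function.Injective (rankBy n key) := by
  intro i j hij
  by_contra hne
  rcases lt_trichotomy (key i) (key j) with h | h | h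
  · exact (Nat.ne_of_lt (rank_lt_rank (Or.inl h))) hij.symm
  · rcases lt_or_gt_of_ne (fun hh : i = j => hne hh) with h' | h'
    · exact (Nat.ne_of_lt (rank_lt_rank (Or.inr ⟨h, h'⟩))) hij
    · exact (Nat.ne_of_lt (rank_lt_rank (Or.inr ⟨h.symm, h'⟩))) hij.symm
  · exact (Nat.ne_of_lt (rank_lt_rank (Or.inl h))) hij

lemma rankBy_lt_n (key : Fin n → ℝ) (i : Fin n) : rankBy n key i < n := by
  have hsub : bset n key i ⊆ Finset.univ.erase i := by
    intro k hk
    refine mem_erase.2 ⟨?_, mem_univ _⟩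
    rintro rfl
    rw [mem_bset] at hk
    rcases hk with h1 | ⟨_, h2⟩
    · exact absurd h1 (lt_irrefl _)
    · exact absurd h2 (lt_irrefl _)
  have h1 : (bset n key i).card ≤ n - 1 := by
    have := card_le_card hsub
    simpa [card_erase_of_mem (mem_univ i)] using this
  have hn : 0 < n := i.pos
  rw [rankBy_eq_card]
  omega

noncomputable def rankEquiv (key : Fin n → ℝ) : Fin n ≃ Fin n :=
  Equiv.ofBijective (fun i => ⟨rankBy n key i, rankBy_lt_n key i⟩)
    ((Finite.injective_iff_bijective).1
      (fun i j h => rankBy_injective key (by simpa using congrArg Fin.val h)))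

lemma rankEquiv_val (key : Fin n → ℝ) (i : Fin n) :
    ((rankEquiv key) i : ℕ) = rankBy n key i := rfl

lemma filter_rank_eq (key : Fin n → ℝ) (i : Fin n) :
    Finset.univ.filter (fun j => rankBy n key j = rankBy n key i) = {i} := by
  ext j
  simp only [mem_filter, mem_univ, true_and, mem_singleton]
  exact ⟨fun h => rankBy_injective key h, fun h => h ▸ rfl⟩

lemma atRank_rankBy (key f : Fin n → ℝ) (i : Fin n) :
    atRank n key f (rankBy n key i) = f i := by
  unfold atRank
  rw [filter_rank_eq key i]
  simp

lemma rankBy_symm (key : Fin n → ℝ) (k : Fin n) :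
    rankBy n key ((rankEquiv key).symm k) = (k : ℕ) := by
  conv_rhs => rw [← Equiv.apply_symm_apply (rankEquiv key) k]
  exact (rankEquiv_val key _).symm

lemma atRank_apply (key f : Fin n → ℝ) (k : ℕ) (hk : k < n) :
    atRank n key f k = f ((rankEquiv key).symm ⟨k, hk⟩) := by
  rw [← atRank_rankBy key f ((rankEquiv key).symm ⟨k, hk⟩), rankBy_symm]

lemma atRank_anti (key : Fin n → ℝ) {k k' : ℕ} (hkk : k ≤ k') (hk' : k' < n) :
    atRank n key key k' ≤ atRank n key key k := by
  have hk : k < n := lt_of_le_of_lt hkk hk'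
  rw [atRank_apply key key k hk, atRank_apply key key k' hk']
  by_contra hcon
  push_neg at hcon
  have := rank_lt_rank (i := (rankEquiv key).symm ⟨k, hk⟩)
      (j := (rankEquiv key).symm ⟨k', hk'⟩) (Or.inl hcon)
  rw [rankBy_symm, rankBy_symm] at this
  simp only [Fin.val_mk] at this
  omega


open Finset

lemma getD_lt {l : List ℝ} {k : ℕ} (h : k < l.length) : l.getD k 0 = l[k] :=
  List.getD_eq_getElem l 0 h

lemma sum_take_eq_range (l : List ℝ) (k : ℕ) (hk : k ≤ l.length) :
    (l.take k).sum = ∑ j ∈ Finset.range k, l.getD j 0 := by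
  induction k with
  | zero => simp
  | succ m ih =>
    rw [List.sum_take_succ l m (by omega), ih (by omega), Finset.sum_range_succ,
      getD_lt (by omega)]

lemma getD_anti {l : List ℝ} (hl : l.Pairwise (· ≥ ·)) {a b : ℕ} (hab : a ≤ b)
    (hb : b < l.length) : l.getD b 0 ≤ l.getD a 0 := by
  rcases eq_or_lt_of_le hab with rfl | h
  · exact le_refl _
  · rw [getD_lt hb, getD_lt (by omega)]
    exact (List.pairwise_iff_getElem.1 hl) a b (by omega) hb h

lemma le_strictMono_fin {m : ℕ} {f : Fin m → ℕ} (hf : StrictMono f) (j : Fin m) :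
    (j : ℕ) ≤ f j := by
  rcases j with ⟨v, hv⟩
  induction v with
  | zero => exact Nat.zero_le _
  | succ w ih =>
    have hw : w < m := by omega
    have h1 := ih hw
    have h2 : f ⟨w, hw⟩ < f ⟨w + 1, hv⟩ := hf (by simp [Fin.lt_def])
    simp only [Fin.val_mk] at h1 h2 ⊢
    omega

lemma sum_indexset_le_prefix {l : List ℝ} (hl : l.Pairwise (· ≥ ·)) (T : Finset ℕ)
    (hT : ∀ k ∈ T, k < l.length) :
    ∑ k ∈ T, l.getD k 0 ≤ ∑ j ∈ Finset.range T.card, l.getD j 0 := by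
  classical
  have hcard : T.card = T.card := rfl
  set emb := T.orderEmbOfFin hcard with hemb
  have hsum : ∑ k ∈ T, l.getD k 0 = ∑ j : Fin T.card, l.getD (emb j) 0 := by
    refine (Finset.sum_bij (fun (j : Fin T.card) (_ : j ∈ Finset.univ) => emb j) ?_ ?_ ?_ ?_).symm
    · intro a _; exact Finset.orderEmbOfFin_mem T hcard a
    · intro a _ b _ hab; exact emb.injective hab
    · intro b hb
      have : b ∈ Set.range emb := by
        rw [hemb, Finset.range_orderEmbOfFin]; exact hb
      rcases this with ⟨a, ha⟩
      exact ⟨a, Finset.mem_univ a, ha⟩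
    · intro a _; rfl
  rw [hsum, ← Fin.sum_univ_eq_sum_range (fun j => l.getD j 0) T.card]
  apply Finset.sum_le_sum
  intro j _
  exact getD_anti hl (le_strictMono_fin emb.strictMono j) (hT _ (Finset.orderEmbOfFin_mem T hcard j))

lemma getD_map_div (l : List ℝ) (P : ℝ) (k : ℕ) :
    (l.map (fun b => b / P)).getD k 0 = l.getD k 0 / P := by
  by_cases h : k < l.length
  · rw [getD_lt (by simpa using h), getD_lt h, List.getElem_map]
  · rw [List.getD_eq_default _ _ (by simpa using Nat.le_of_not_lt h),
      List.getD_eq_default _ _ (Nat.le_of_not_lt h), zero_div]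

lemma sum_map_div (l : List ℝ) (P : ℝ) : (l.map (fun b => b / P)).sum = l.sum / P := by
  induction l with
  | nil => simp
  | cons a t ih => simp [ih, add_div]

lemma getD_take (l : List ℝ) {k m : ℕ} (h : k < m) :
    (l.take m).getD k 0 = l.getD k 0 := by
  by_cases hk : k < l.length
  · rw [getD_lt (by simp; omega), getD_lt hk, List.getElem_take]
  · rw [List.getD_eq_default _ _ (by simp; omega), List.getD_eq_default _ _ (by omega)]

lemma getD_drop (l : List ℝ) (m k : ℕ) (h : m + k < l.length) :
    (l.drop m).getD k 0 = l.getD (m + k) 0 := by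
  rw [getD_lt (by simp; omega), getD_lt h, List.getElem_drop]


structure Inv (Bs Ds : List ℝ) : Prop where
  len : Bs.length = Ds.length
  bpos : ∀ b ∈ Bs, 0 < b
  bsorted : Bs.Pairwise (· ≥ ·)
  dsorted : Ds.Pairwise (· ≥ ·)
  dnn : ∀ d ∈ Ds, 0 ≤ d
  dpos : ∀ k, k + 1 < Ds.length → 0 < Ds.getD k 0
  dhead : Ds ≠ [] → 0 < Ds.getD 0 0

variable {Bs Ds : List ℝ}

lemma b_getD_pos (inv : Inv Bs Ds) {k : ℕ} (hk : k < Bs.length) : 0 < Bs.getD k 0 := by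
  rw [getD_lt hk]
  exact inv.bpos _ (List.getElem_mem hk)

lemma d_getD_nn (inv : Inv Bs Ds) (k : ℕ) : 0 ≤ Ds.getD k 0 := by
  by_cases hk : k < Ds.length
  · rw [getD_lt hk]; exact inv.dnn _ (List.getElem_mem hk)
  · rw [List.getD_eq_default _ _ (by omega)]

lemma x_pos (inv : Inv Bs Ds) {k : ℕ} (h1 : 1 ≤ k) (hk : k ≤ Ds.length) :
    0 < (Ds.take k).sum := by
  rw [sum_take_eq_range _ _ hk]
  have h0 : 0 < Ds.getD 0 0 := inv.dhead (by intro h; rw [h] at hk; simp at hk; omega)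
  calc 0 < Ds.getD 0 0 := h0
    _ ≤ ∑ j ∈ Finset.range k, Ds.getD j 0 :=
      Finset.single_le_sum (fun j _ => d_getD_nn inv j) (Finset.mem_range.2 (by omega))

lemma y_nonneg (inv : Inv Bs Ds) (k : ℕ) : 0 ≤ (Bs.take k).sum :=
  List.sum_nonneg (fun b hb => le_of_lt (inv.bpos b (List.mem_of_mem_take hb)))

lemma price_ge (inv : Inv Bs Ds) {k : ℕ} (hk : k ≤ Bs.length) :
    (Bs.take k).sum ≤ psbPrice Bs Ds * (Ds.take k).sum := by
  rcases Nat.eq_zero_or_pos k with rfl | h1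
  · simp
  have hlen1 : 1 ≤ Bs.length := le_trans h1 hk
  have himg : ((Finset.Icc 1 Bs.length).image
      (fun l => (Bs.take l).sum / (Ds.take l).sum)).Nonempty :=
    ⟨_, Finset.mem_image.2 ⟨1, Finset.mem_Icc.2 ⟨le_refl _, hlen1⟩, rfl⟩⟩
  have hP : psbPrice Bs Ds = ((Finset.Icc 1 Bs.length).image
      (fun l => (Bs.take l).sum / (Ds.take l).sum)).max' himg := by
    rw [psbPrice, dif_pos himg]
  have hXk : 0 < (Ds.take k).sum := x_pos inv h1 (inv.len ▸ hk)
  have hle : (Bs.take k).sum / (Ds.take k).sum ≤ psbPrice Bs Ds := by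
    rw [hP]
    apply Finset.le_max'
    exact Finset.mem_image.2 ⟨k, Finset.mem_Icc.2 ⟨h1, hk⟩, rfl⟩
  calc (Bs.take k).sum = (Bs.take k).sum / (Ds.take k).sum * (Ds.take k).sum := by
        field_simp
    _ ≤ psbPrice Bs Ds * (Ds.take k).sum := by
        exact mul_le_mul_of_nonneg_right hle (le_of_lt hXk)

lemma lstar_spec (inv : Inv Bs Ds) (hne : Bs ≠ []) :
    1 ≤ psbLstar Bs Ds ∧ psbLstar Bs Ds ≤ Bs.length ∧
    (Bs.take (psbLstar Bs Ds)).sum = psbPrice Bs Ds * (Ds.take (psbLstar Bs Ds)).sum := by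
  have hlen1 : 1 ≤ Bs.length := List.length_pos_iff.2 hne
  have himg : ((Finset.Icc 1 Bs.length).image
      (fun l => (Bs.take l).sum / (Ds.take l).sum)).Nonempty :=
    ⟨_, Finset.mem_image.2 ⟨1, Finset.mem_Icc.2 ⟨le_refl _, hlen1⟩, rfl⟩⟩
  have hP : psbPrice Bs Ds = ((Finset.Icc 1 Bs.length).image
      (fun l => (Bs.take l).sum / (Ds.take l).sum)).max' himg := by
    rw [psbPrice, dif_pos himg]
  have hmem := Finset.max'_mem _ himg
  rw [← hP] at hmem
  rcases Finset.mem_image.1 hmem with ⟨l₀, hl₀, hr⟩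
  have hfil : ((Finset.Icc 1 Bs.length).filter
      (fun l => (Bs.take l).sum / (Ds.take l).sum = psbPrice Bs Ds)).Nonempty :=
    ⟨l₀, Finset.mem_filter.2 ⟨hl₀, hr⟩⟩
  have hL : psbLstar Bs Ds = ((Finset.Icc 1 Bs.length).filter
      (fun l => (Bs.take l).sum / (Ds.take l).sum = psbPrice Bs Ds)).max' hfil := by
    rw [psbLstar, dif_pos hfil]
  have hLmem := Finset.max'_mem _ hfil
  rw [← hL] at hLmem
  rcases Finset.mem_filter.1 hLmem with ⟨hIcc, hrL⟩
  rcases Finset.mem_Icc.1 hIcc with ⟨h1, h2⟩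
  refine ⟨h1, h2, ?_⟩
  have hXL : 0 < (Ds.take (psbLstar Bs Ds)).sum := x_pos inv h1 (inv.len ▸ h2)
  rw [div_eq_iff (ne_of_gt hXL)] at hrL
  rw [hrL]

lemma price_pos (inv : Inv Bs Ds) (hne : Bs ≠ []) : 0 < psbPrice Bs Ds := by
  have hlen1 : 1 ≤ Bs.length := List.length_pos_iff.2 hne
  have h1 := price_ge inv hlen1
  have hY : 0 < (Bs.take 1).sum := by
    rw [sum_take_eq_range _ _ hlen1, Finset.sum_range_one]
    exact b_getD_pos inv hlen1
  have hX : 0 < (Ds.take 1).sum := x_pos inv (le_refl 1) (inv.len ▸ hlen1)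
  nlinarith

lemma sum_take_succ_getD (l : List ℝ) (k : ℕ) (hk : k < l.length) :
    (l.take (k + 1)).sum = (l.take k).sum + l.getD k 0 := by
  rw [List.sum_take_succ l k hk, getD_lt hk]

lemma lstar_remaining_pos (inv : Inv Bs Ds) (hne : Bs ≠ [])
    (h : psbLstar Bs Ds < Bs.length) : 0 < Ds.getD (psbLstar Bs Ds) 0 := by
  obtain ⟨h1, h2, heq⟩ := lstar_spec inv hne
  have hbd := inv.len
  by_cases hL : psbLstar Bs Ds + 1 < Ds.length
  · exact inv.dpos _ hL
  · by_contra hcon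
    have hz : Ds.getD (psbLstar Bs Ds) 0 = 0 :=
      le_antisymm (not_lt.1 hcon) (d_getD_nn inv _)
    have hXsucc : (Ds.take (psbLstar Bs Ds + 1)).sum = (Ds.take (psbLstar Bs Ds)).sum := by
      rw [sum_take_succ_getD Ds _ (by omega), hz, add_zero]
    have hp := price_ge inv (show psbLstar Bs Ds + 1 ≤ Bs.length by omega)
    rw [hXsucc, ← heq, sum_take_succ_getD Bs _ (by omega)] at hp
    have := b_getD_pos inv h
    linarith

lemma inv_drop (inv : Inv Bs Ds) (hne : Bs ≠ []) (hlt : psbLstar Bs Ds < Bs.length) :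
    Inv (Bs.drop (psbLstar Bs Ds)) (Ds.drop (psbLstar Bs Ds)) := by
  have hbd := inv.len
  have hlend : (Ds.drop (psbLstar Bs Ds)).length = Ds.length - psbLstar Bs Ds :=
    List.length_drop
  refine ⟨?_, ?_, ?_, ?_, ?_, ?_, ?_⟩
  · simp [inv.len]
  · exact fun b hb => inv.bpos b (List.mem_of_mem_drop hb)
  · exact List.Pairwise.sublist (List.drop_sublist _ _) inv.bsorted
  · exact List.Pairwise.sublist (List.drop_sublist _ _) inv.dsorted
  · exact fun d hd => inv.dnn d (List.mem_of_mem_drop hd)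
  · intro k hk
    rw [hlend] at hk
    rw [getD_drop Ds _ k (by omega)]
    exact inv.dpos _ (by omega)
  · intro hnil
    rw [getD_drop Ds _ 0 (by omega), add_zero]
    exact lstar_remaining_pos inv hne hlt

lemma sum_take_add (l : List ℝ) (a b : ℕ) :
    (l.take (a + b)).sum = (l.take a).sum + ((l.drop a).take b).sum := by
  rw [List.take_add, List.sum_append]

lemma price_drop_le (inv : Inv Bs Ds) (hne : Bs ≠ [])
    (hlt : psbLstar Bs Ds < Bs.length) :
    psbPrice (Bs.drop (psbLstar Bs Ds)) (Ds.drop (psbLstar Bs Ds)) ≤ psbPrice Bs Ds := by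
  have sub := inv_drop inv hne hlt
  have hdl : (Bs.drop (psbLstar Bs Ds)).length = Bs.length - psbLstar Bs Ds :=
    List.length_drop
  have hne' : Bs.drop (psbLstar Bs Ds) ≠ [] := by
    intro h; rw [h] at hdl; simp at hdl; omega
  obtain ⟨h1', h2', heq'⟩ := lstar_spec sub hne'
  obtain ⟨h1, h2, heq⟩ := lstar_spec inv hne
  have hX' : 0 < ((Ds.drop (psbLstar Bs Ds)).take
      (psbLstar (Bs.drop (psbLstar Bs Ds)) (Ds.drop (psbLstar Bs Ds)))).sum :=
    x_pos sub h1' (sub.len ▸ h2')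
  rw [hdl] at h2'
  by_contra hc
  push_neg at hc
  have hp := price_ge inv (show psbLstar Bs Ds +
      psbLstar (Bs.drop (psbLstar Bs Ds)) (Ds.drop (psbLstar Bs Ds)) ≤ Bs.length by omega)
  rw [sum_take_add Bs _ _, sum_take_add Ds _ _, heq, heq'] at hp
  nlinarith

noncomputable def psbPricesAux : ℕ → List ℝ → List ℝ → List ℝ
  | 0, _, _ => []
  | fuel + 1, Bs, Ds =>
    if Bs = [] then []
    else if (Ds.take Bs.length).sum ≤ 0 then Bs.map (fun _ => 0)
    else List.replicate (psbLstar Bs Ds) (psbPrice Bs Ds) ++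
      psbPricesAux fuel (Bs.drop (psbLstar Bs Ds)) (Ds.drop (psbLstar Bs Ds))

lemma getD_replicate {a : ℝ} {m k : ℕ} (h : k < m) :
    (List.replicate m a).getD k 0 = a := by
  rw [getD_lt (l := List.replicate m a) (by simpa using h)]
  simp

lemma psbAux_nil (fuel : ℕ) (Ds : List ℝ) : psbAux fuel [] Ds = [] := by
  cases fuel <;> simp [psbAux]

lemma psbPricesAux_nil (fuel : ℕ) (Ds : List ℝ) : psbPricesAux fuel [] Ds = [] := by
  cases fuel <;> simp [psbPricesAux]

structure Good (Bs Ds cs ps : List ℝ) : Prop where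
  len_cs : cs.length = Bs.length
  len_ps : ps.length = Bs.length
  ps_pos : ∀ q ∈ ps, 0 < q
  ps_le : ∀ q ∈ ps, q ≤ psbPrice Bs Ds
  ps_sorted : ps.Pairwise (· ≥ ·)
  cs_pos : ∀ c ∈ cs, 0 < c
  mul : ∀ k < Bs.length, Bs.getD k 0 = ps.getD k 0 * cs.getD k 0
  eqdrop : ∀ k < Bs.length, (k + 1 = Bs.length ∨ ps.getD (k + 1) 0 < ps.getD k 0) →
      (cs.take (k + 1)).sum = (Ds.take (k + 1)).sum
  feas : ∀ T : Finset ℕ, (∀ k ∈ T, k < Bs.length) →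
      (∑ k ∈ T, cs.getD k 0) ≤ (Ds.take T.card).sum

lemma good_nil (Ds : List ℝ) : Good [] Ds [] [] := by
  refine ⟨rfl, rfl, by simp, by simp, by simp, by simp, by simp, by simp, ?_⟩
  intro T hT
  have : T = ∅ := Finset.eq_empty_of_forall_notMem (fun k hk => by
    have := hT k hk; simp at this)
  subst this
  simp

theorem psb_master (fuel : ℕ) : ∀ (Bs Ds : List ℝ), Bs.length ≤ fuel → Inv Bs Ds →
    Good Bs Ds (psbAux fuel Bs Ds) (psbPricesAux fuel Bs Ds) := by
  induction fuel with
  | zero =>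
    intro Bs Ds hf inv
    have hBs : Bs = [] := List.length_eq_zero_iff.1 (by omega)
    subst hBs
    simpa [psbAux_nil, psbPricesAux_nil] using good_nil Ds
  | succ fuel ih =>
    intro Bs Ds hf inv
    by_cases hne : Bs = []
    · subst hne
      simpa [psbAux_nil, psbPricesAux_nil] using good_nil Ds
    have hlen1 : 0 < Bs.length := List.length_pos_iff.2 hne
    have hzero : ¬ (Ds.take Bs.length).sum ≤ 0 := by
      push_neg
      exact x_pos inv hlen1 (le_of_eq inv.len)
    obtain ⟨hL1, hL2, heq⟩ := lstar_spec inv hne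
    have hP : 0 < psbPrice Bs Ds := price_pos inv hne
    set L := psbLstar Bs Ds with hLdef
    set P := psbPrice Bs Ds with hPdef
    set left : List ℝ := (Bs.take L).map (fun b => b / P) with hleftdef
    set rep : List ℝ := List.replicate L P with hrepdef
    set cs' := psbAux fuel (Bs.drop L) (Ds.drop L) with hcs'def
    set ps' := psbPricesAux fuel (Bs.drop L) (Ds.drop L) with hps'def
    have hcs : psbAux (fuel + 1) Bs Ds = left ++ cs' := by
      rw [psbAux]; rw [if_neg hne, if_neg hzero]
    have hps : psbPricesAux (fuel + 1) Bs Ds = rep ++ ps' := by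
      rw [psbPricesAux]; rw [if_neg hne, if_neg hzero]
    have hleft : left.length = L := by
      rw [hleftdef, List.length_map, List.length_take]; omega
    have hrep : rep.length = L := List.length_replicate
    have hdropB : (Bs.drop L).length = Bs.length - L := List.length_drop
    have hdropD : (Ds.drop L).length = Ds.length - L := List.length_drop
    have hlenBD := inv.len
    have subgood : Good (Bs.drop L) (Ds.drop L) cs' ps' := by
      rcases lt_or_eq_of_le hL2 with hlt | heqL
      · exact ih _ _ (by omega) (inv_drop inv hne hlt)
      · have hBnil : Bs.drop L = [] := List.drop_eq_nil_of_le (by omega)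
        rw [hcs'def, hps'def, hBnil, psbAux_nil, psbPricesAux_nil]
        exact good_nil _
    have hps'le : ∀ q ∈ ps', q ≤ P := by
      intro q hq
      rcases lt_or_eq_of_le hL2 with hlt | heqL
      · exact le_trans (subgood.ps_le q hq) (price_drop_le inv hne hlt)
      · have hBnil : Bs.drop L = [] := List.drop_eq_nil_of_le (by omega)
        rw [hps'def, hBnil, psbPricesAux_nil] at hq
        simp at hq
    -- left entries:
    have hleft_getD : ∀ k, k < L → left.getD k 0 = Bs.getD k 0 / P := by
      intro k hk
      rw [hleftdef, getD_map_div, getD_take Bs hk]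
    have hleft_sum : left.sum = (Ds.take L).sum := by
      rw [hleftdef, sum_map_div, heq, mul_comm, mul_div_assoc, div_self (ne_of_gt hP), mul_one]
    rw [hcs, hps]
    refine ⟨?_, ?_, ?_, ?_, ?_, ?_, ?_, ?_, ?_⟩
    · -- len_cs
      rw [List.length_append, hleft, subgood.len_cs, hdropB]; omega
    · -- len_ps
      rw [List.length_append, hrep, subgood.len_ps, hdropB]; omega
    · -- ps_pos
      intro q hq
      rcases List.mem_append.1 hq with h | h
      · rw [List.eq_of_mem_replicate h]; exact hP
      · exact subgood.ps_pos q h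
    · -- ps_le
      intro q hq
      rcases List.mem_append.1 hq with h | h
      · rw [List.eq_of_mem_replicate h]
      · exact hps'le q h
    · -- ps_sorted
      rw [List.pairwise_append]
      refine ⟨?_, subgood.ps_sorted, ?_⟩
      · exact List.pairwise_replicate.2 (Or.inr (le_refl P))
      · intro a ha b hb
        rw [List.eq_of_mem_replicate ha]
        exact hps'le b hb
    · -- cs_pos
      intro c hc
      rcases List.mem_append.1 hc with h | h
      · rcases List.mem_map.1 h with ⟨b, hb, rfl⟩
        exact div_pos (inv.bpos b (List.mem_of_mem_take hb)) hP
      · exact subgood.cs_pos c h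
    · -- mul
      intro k hk
      by_cases hkL : k < L
      · rw [List.getD_append _ _ _ _ (by omega : k < left.length),
          List.getD_append _ _ _ _ (by omega : k < rep.length)]
        rw [hleft_getD k hkL, hrepdef, getD_replicate hkL]
        rw [mul_comm, div_mul_cancel₀ _ (ne_of_gt hP)]
      · have hkL' : L ≤ k := le_of_not_gt hkL
        rw [List.getD_append_right _ _ _ _ (by omega : left.length ≤ k),
          List.getD_append_right _ _ _ _ (by omega : rep.length ≤ k), hleft, hrep]
        have hk2 : L + (k - L) = k := by omega
        have h3 := getD_drop Bs L (k - L) (by omega)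
        rw [hk2] at h3
        rw [← h3]
        exact subgood.mul (k - L) (by omega)
    · -- eqdrop
      intro k hk hcond
      by_cases hkL : k + 1 < L
      · exfalso
        rcases hcond with h | h
        · omega
        · rw [List.getD_append _ _ _ _ (by omega : k + 1 < rep.length),
            List.getD_append _ _ _ _ (by omega : k < rep.length), hrepdef,
            getD_replicate (by omega : k + 1 < L),
            getD_replicate (by omega : k < L)] at h
          exact lt_irrefl _ h
      by_cases hkL2 : k + 1 = L
      · have htake : (left ++ cs').take (k + 1) = left := by
          rw [← hkL2] at hleft
          rw [← hleft, List.take_left]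
        rw [htake, hleft_sum, hkL2]
      · have hkL' : L ≤ k := by omega
        have htake : (left ++ cs').take (k + 1) = left ++ cs'.take (k + 1 - L) := by
          rw [List.take_append, List.take_of_length_le (by omega), hleft]
        rw [htake, List.sum_append, hleft_sum]
        have hsplit : (Ds.take (k + 1)).sum
            = (Ds.take L).sum + ((Ds.drop L).take (k + 1 - L)).sum := by
          have hsp : k + 1 = L + (k + 1 - L) := by omega
          conv_lhs => rw [hsp]
          rw [sum_take_add]
        rw [hsplit]
        congr 1
        have hsub := subgood.eqdrop (k - L) (by omega)
        have hrw : k - L + 1 = k + 1 - L := by omega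
        rw [hrw] at hsub
        apply hsub
        rcases hcond with h | h
        · left; omega
        · right
          rw [List.getD_append_right _ _ _ _ (by omega : rep.length ≤ k + 1),
            List.getD_append_right _ _ _ _ (by omega : rep.length ≤ k), hrep] at h
          exact h
    · -- feas
      intro T hT
      classical
      set T1 := T.filter (fun k => k < L) with hT1def
      set T2 := T.filter (fun k => ¬ k < L) with hT2def
      have hcard : T1.card + T2.card = T.card := Finset.card_filter_add_card_filter_not _
      have hT1L : T1.card ≤ L := by
        have : T1 ⊆ Finset.range L := by
          intro k hk
          rcases Finset.mem_filter.1 hk with ⟨_, h2⟩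
          exact Finset.mem_range.2 h2
        simpa using Finset.card_le_card this
      have hT2le : T2.card ≤ Bs.length - L := by
        have : T2 ⊆ Finset.Ico L Bs.length := by
          intro k hk
          rcases Finset.mem_filter.1 hk with ⟨h1, h2⟩
          exact Finset.mem_Ico.2 ⟨by omega, hT k h1⟩
        have := Finset.card_le_card this
        simpa [Nat.card_Ico] using this
      have hsum_split : ∑ k ∈ T, (left ++ cs').getD k 0
          = ∑ k ∈ T1, (left ++ cs').getD k 0 + ∑ k ∈ T2, (left ++ cs').getD k 0 :=
        (Finset.sum_filter_add_sum_filter_not T _ _).symm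
      -- first part
      have hpart1 : ∑ k ∈ T1, (left ++ cs').getD k 0 ≤ (Ds.take T1.card).sum := by
        have he : ∀ k ∈ T1, (left ++ cs').getD k 0 = Bs.getD k 0 / P := by
          intro k hk
          rcases Finset.mem_filter.1 hk with ⟨_, h2⟩
          rw [List.getD_append _ _ _ _ (by omega : k < left.length), hleft_getD k h2]
        rw [Finset.sum_congr rfl he, ← Finset.sum_div]
        have h1 : ∑ k ∈ T1, Bs.getD k 0 ≤ ∑ j ∈ Finset.range T1.card, Bs.getD j 0 :=
          sum_indexset_le_prefix inv.bsorted T1 (fun k hk => by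
            rcases Finset.mem_filter.1 hk with ⟨_, h2⟩; omega)
        have h2 : (∑ j ∈ Finset.range T1.card, Bs.getD j 0) = (Bs.take T1.card).sum :=
          (sum_take_eq_range Bs T1.card (by omega)).symm
        have h3 : (Bs.take T1.card).sum ≤ P * (Ds.take T1.card).sum :=
          price_ge inv (by omega)
        rw [div_le_iff₀ hP]
        calc ∑ k ∈ T1, Bs.getD k 0 ≤ (Bs.take T1.card).sum := by rw [← h2]; exact h1
          _ ≤ P * (Ds.take T1.card).sum := h3
          _ = (Ds.take T1.card).sum * P := mul_comm _ _
      -- second part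
      have hpart2 : ∑ k ∈ T2, (left ++ cs').getD k 0 ≤ ((Ds.drop T1.card).take T2.card).sum := by
        have he : ∀ k ∈ T2, (left ++ cs').getD k 0 = cs'.getD (k - L) 0 := by
          intro k hk
          rcases Finset.mem_filter.1 hk with ⟨_, h2⟩
          rw [List.getD_append_right _ _ _ _ (by omega : left.length ≤ k), hleft]
        rw [Finset.sum_congr rfl he]
        have himg : ∑ k ∈ T2, cs'.getD (k - L) 0 = ∑ k' ∈ T2.image (fun k => k - L), cs'.getD k' 0 := by
          rw [Finset.sum_image]
          intro a ha b hb hab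
          rcases Finset.mem_filter.1 ha with ⟨_, ha2⟩
          rcases Finset.mem_filter.1 hb with ⟨_, hb2⟩
          simp only at hab
          omega
        have hcard2 : (T2.image (fun k => k - L)).card = T2.card := by
          apply Finset.card_image_of_injOn
          intro a ha b hb hab
          rcases Finset.mem_filter.1 ha with ⟨_, ha2⟩
          rcases Finset.mem_filter.1 hb with ⟨_, hb2⟩
          simp only at hab
          omega
        have hfeas' := subgood.feas (T2.image (fun k => k - L)) (by
          intro k' hk'
          rcases Finset.mem_image.1 hk' with ⟨k, hk, rfl⟩
          rcases Finset.mem_filter.1 hk with ⟨h1, h2⟩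
          have := hT k h1
          omega)
        rw [hcard2] at hfeas'
        rw [himg]
        refine le_trans hfeas' ?_
        -- window shift: sum over Ds[L..L+m) ≤ sum over Ds[T1.card..T1.card+m)
        have hm : T2.card ≤ (Ds.drop L).length := by omega
        have hm2 : T2.card ≤ (Ds.drop T1.card).length := by
          rw [List.length_drop]; omega
        rw [sum_take_eq_range _ _ hm, sum_take_eq_range _ _ hm2]
        apply Finset.sum_le_sum
        intro j hj
        rw [Finset.mem_range] at hj
        rw [getD_drop Ds L j (by omega), getD_drop Ds T1.card j (by omega)]
        exact getD_anti inv.dsorted (by omega) (by omega)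
      have hfinal : (Ds.take T.card).sum
          = (Ds.take T1.card).sum + ((Ds.drop T1.card).take T2.card).sum := by
        rw [← hcard, sum_take_add]
      rw [hsum_split, hfinal]
      exact add_le_add hpart1 hpart2

/-! ### Abel summation comparison -/

lemma abel_le {n : ℕ} (hn : 0 < n) (p zf cf X : ℕ → ℝ)
    (hp : ∀ k, k + 1 < n → p (k + 1) ≤ p k)
    (hpn : 0 ≤ p (n - 1))
    (hZ : ∀ m, m ≤ n → ∑ k ∈ Finset.range m, zf k ≤ X m)
    (hCeq : ∀ k, k < n → (k + 1 = n ∨ p (k + 1) < p k) →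
      ∑ j ∈ Finset.range (k + 1), cf j = X (k + 1)) :
    ∑ k ∈ Finset.range n, p k * zf k ≤ ∑ k ∈ Finset.range n, p k * cf k := by
  have I1 := Finset.sum_range_by_parts p zf n
  have I2 := Finset.sum_range_by_parts p cf n
  simp only [smul_eq_mul] at I1 I2
  rw [I1, I2]
  have hCn : ∑ j ∈ Finset.range n, cf j = X n := by
    have := hCeq (n - 1) (by omega) (Or.inl (by omega))
    rwa [show n - 1 + 1 = n by omega] at this
  have hA : p (n - 1) * ∑ k ∈ Finset.range n, zf k ≤ p (n - 1) * ∑ k ∈ Finset.range n, cf k := by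
    rw [hCn]
    exact mul_le_mul_of_nonneg_left (hZ n (le_refl n)) hpn
  have hB : ∑ i ∈ Finset.range (n - 1), (p (i + 1) - p i) * ∑ j ∈ Finset.range (i + 1), cf j ≤
      ∑ i ∈ Finset.range (n - 1), (p (i + 1) - p i) * ∑ j ∈ Finset.range (i + 1), zf j := by
    apply Finset.sum_le_sum
    intro i hi
    rw [Finset.mem_range] at hi
    rcases eq_or_lt_of_le (hp i (by omega)) with heq | hlt
    · rw [heq]; simp
    · have hfac : p (i + 1) - p i < 0 := by linarith
      have hCi : ∑ j ∈ Finset.range (i + 1), cf j = X (i + 1) := hCeq i (by omega) (Or.inr hlt)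
      have hZi : ∑ j ∈ Finset.range (i + 1), zf j ≤ X (i + 1) := hZ (i + 1) (by omega)
      rw [hCi]
      exact mul_le_mul_of_nonpos_left (by linarith) (le_of_lt hfac)
  linarith

/-! ### Bridging to bidders -/

variable {n : ℕ}

lemma sum_reindex_rank (b : Fin n → ℝ) (w : ℕ → ℝ) (z : Fin n → ℝ) (m : ℕ) (hm : m ≤ n) :
    ∑ j ∈ Finset.univ.filter (fun j => rankBy n b j < m), w (rankBy n b j) * z j
      = ∑ k ∈ Finset.range m,
          w k * (if h : k < n then z ((rankEquiv b).symm ⟨k, h⟩) else 0) := by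
  classical
  refine Finset.sum_bij' (fun (j : Fin n) (_ : j ∈ Finset.univ.filter (fun j => rankBy n b j < m)) => rankBy n b j)
    (fun (k : ℕ) (hk : k ∈ Finset.range m) =>
      (rankEquiv b).symm ⟨k, lt_of_lt_of_le (Finset.mem_range.1 hk) hm⟩) ?_ ?_ ?_ ?_ ?_
  · intro a ha
    exact Finset.mem_range.2 (Finset.mem_filter.1 ha).2
  · intro k hk
    refine Finset.mem_filter.2 ⟨Finset.mem_univ _, ?_⟩
    rw [rankBy_symm]
    exact Finset.mem_range.1 hk
  · intro a ha
    exact Equiv.symm_apply_apply (rankEquiv b) a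
  · intro k hk
    simp [rankBy_symm]
  · intro a ha
    have hlt : rankBy n b a < n := rankBy_lt_n b a
    rw [dif_pos hlt]
    congr 1
    exact (congrArg z (Equiv.symm_apply_apply (rankEquiv b) a)).symm

lemma card_rank_lt (b : Fin n → ℝ) (m : ℕ) (hm : m ≤ n) :
    (Finset.univ.filter (fun j => rankBy n b j < m)).card = m := by
  classical
  have key : (Finset.univ.filter (fun j => rankBy n b j < m)).card = (Finset.range m).card := by
    refine Finset.card_bij (fun (j : Fin n) (_ : j ∈ Finset.univ.filter (fun j => rankBy n b j < m)) => rankBy n b j) ?_ ?_ ?_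
    · intro a ha
      exact Finset.mem_range.2 (Finset.mem_filter.1 ha).2
    · intro a _ a' _ hab
      exact rankBy_injective _ hab
    · intro k hk
      have hkn : k < n := lt_of_lt_of_le (Finset.mem_range.1 hk) hm
      refine ⟨(rankEquiv b).symm ⟨k, hkn⟩, Finset.mem_filter.2 ⟨Finset.mem_univ _, ?_⟩, ?_⟩
      · rw [rankBy_symm]
        exact Finset.mem_range.1 hk
      · exact rankBy_symm b ⟨k, hkn⟩
  rw [key, Finset.card_range]

/-! ### Facts about a single run of the mechanism -/

variable {D : Fin n → ℝ}

lemma getD_BsL (b : Fin n → ℝ) {k : ℕ} (hk : k < n) :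
    ((List.range n).map (atRank n b b)).getD k 0 = atRank n b b k := by
  rw [getD_lt (by simpa using hk), List.getElem_map, List.getElem_range]

lemma getD_DsL {k : ℕ} (hk : k < n) :
    ((List.finRange n).map D).getD k 0 = D ⟨k, hk⟩ := by
  rw [getD_lt (by simpa using hk), List.getElem_map, List.getElem_finRange]
  exact congrArg D (Fin.ext rfl)

lemma inv_main (hD : StrictAnti D) (hDnn : ∀ j, 0 ≤ D j) (hD0 : ∀ (h : 0 < n), 0 < D ⟨0, h⟩)
    (b : Fin n → ℝ) (hb : ∀ j, 0 < b j) :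
    Inv ((List.range n).map (atRank n b b)) ((List.finRange n).map D) := by
  have hlenB : ((List.range n).map (atRank n b b)).length = n := by simp
  have hlenD : ((List.finRange n).map D).length = n := by simp
  refine ⟨by simp, ?_, ?_, ?_, ?_, ?_, ?_⟩
  · intro x hx
    rcases List.mem_map.1 hx with ⟨k, hk, rfl⟩
    rw [List.mem_range] at hk
    rw [atRank_apply b b k hk]
    exact hb _
  · rw [List.pairwise_iff_getElem]
    intro u v hu hv huv
    rw [hlenB] at hu hv
    have h1 : ((List.range n).map (atRank n b b))[u]'(by simpa using hu) = atRank n b b u := by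
      rw [List.getElem_map, List.getElem_range]
    have h2 : ((List.range n).map (atRank n b b))[v]'(by simpa using hv) = atRank n b b v := by
      rw [List.getElem_map, List.getElem_range]
    rw [h1, h2]
    exact atRank_anti b (le_of_lt huv) hv
  · rw [List.pairwise_iff_getElem]
    intro u v hu hv huv
    rw [hlenD] at hu hv
    have h1 : ((List.finRange n).map D)[u]'(by simpa using hu) = D ⟨u, hu⟩ := by
      rw [List.getElem_map, List.getElem_finRange]
      exact congrArg D (Fin.ext rfl)
    have h2 : ((List.finRange n).map D)[v]'(by simpa using hv) = D ⟨v, hv⟩ := by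
      rw [List.getElem_map, List.getElem_finRange]
      exact congrArg D (Fin.ext rfl)
    rw [h1, h2]
    exact le_of_lt (hD (by simpa [Fin.lt_def] using huv))
  · intro d hd
    rcases List.mem_map.1 hd with ⟨k, _, rfl⟩
    exact hDnn k
  · intro k hk
    rw [hlenD] at hk
    rw [getD_DsL (by omega)]
    rcases Nat.eq_zero_or_pos (n - 1 - k) with h | h
    · omega
    · calc (0:ℝ) ≤ D ⟨n - 1, by omega⟩ := hDnn _
        _ < D ⟨k, by omega⟩ := hD (by simp [Fin.lt_def]; omega)
  · intro hne
    have hn : 0 < n := by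
      by_contra h
      have : n = 0 := by omega
      subst this
      simp at hne
    rw [getD_DsL hn]
    exact hD0 hn

noncomputable def BsL {n : ℕ} (b : Fin n → ℝ) : List ℝ := (List.range n).map (atRank n b b)
noncomputable def DsL {n : ℕ} (D : Fin n → ℝ) : List ℝ := (List.finRange n).map D
noncomputable def csL {n : ℕ} (D : Fin n → ℝ) (b : Fin n → ℝ) : List ℝ :=
  psbList (BsL b) (DsL D)
noncomputable def psL {n : ℕ} (D : Fin n → ℝ) (b : Fin n → ℝ) : List ℝ :=
  psbPricesAux (BsL b).length (BsL b) (DsL D)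

variable {n : ℕ} {D : Fin n → ℝ}

lemma clicks_eq_csL (b : Fin n → ℝ) (j : Fin n) :
    psbClicks n D b j = (csL D b).getD (rankBy n b j) 0 := rfl

lemma len_BsL (b : Fin n → ℝ) : (BsL b).length = n := by simp [BsL]
lemma len_DsL : (DsL D).length = n := by simp [DsL]

lemma good_run (hD : StrictAnti D) (hDnn : ∀ j, 0 ≤ D j)
    (hD0 : ∀ (h : 0 < n), 0 < D ⟨0, h⟩) (b : Fin n → ℝ) (hb : ∀ j, 0 < b j) :
    Good (BsL b) (DsL D) (csL D b) (psL D b) :=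
  psb_master _ _ _ (le_refl _) (inv_main hD hDnn hD0 b hb)

lemma clicks_pos (hD : StrictAnti D) (hDnn : ∀ j, 0 ≤ D j)
    (hD0 : ∀ (h : 0 < n), 0 < D ⟨0, h⟩) (b : Fin n → ℝ) (hb : ∀ j, 0 < b j) (j : Fin n) :
    0 < psbClicks n D b j := by
  have g := good_run hD hDnn hD0 b hb
  have hlen : (csL D b).length = n := g.len_cs.trans (len_BsL b)
  rw [clicks_eq_csL, getD_lt (by rw [hlen]; exact rankBy_lt_n b j)]
  exact g.cs_pos _ (List.getElem_mem _)

lemma run_feas (hD : StrictAnti D) (hDnn : ∀ j, 0 ≤ D j)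
    (hD0 : ∀ (h : 0 < n), 0 < D ⟨0, h⟩) (b : Fin n → ℝ) (hb : ∀ j, 0 < b j)
    (S : Finset (Fin n)) :
    ∑ j ∈ S, psbClicks n D b j ≤ ((DsL D).take S.card).sum := by
  classical
  have g := good_run hD hDnn hD0 b hb
  have himg : ∑ j ∈ S, psbClicks n D b j
      = ∑ k ∈ S.image (rankBy n b), (csL D b).getD k 0 := by
    rw [Finset.sum_image (fun a _ a' _ h => rankBy_injective b h)]
    rfl
  have hcard : (S.image (rankBy n b)).card = S.card :=
    Finset.card_image_of_injective S (rankBy_injective b)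
  have hfeas := g.feas (S.image (rankBy n b)) (by
    intro k hk
    rcases Finset.mem_image.1 hk with ⟨j, _, rfl⟩
    rw [len_BsL]
    exact rankBy_lt_n b j)
  rw [hcard] at hfeas
  rw [himg]
  exact hfeas

lemma run_opt (hn : 0 < n) (hD : StrictAnti D) (hDnn : ∀ j, 0 ≤ D j)
    (hD0 : ∀ (h : 0 < n), 0 < D ⟨0, h⟩) (b : Fin n → ℝ) (hb : ∀ j, 0 < b j)
    (z : Fin n → ℝ)
    (hz : ∀ S : Finset (Fin n), ∑ j ∈ S, z j ≤ ((DsL D).take S.card).sum) :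
    ∑ j, (b j / psbClicks n D b j) * z j ≤ ∑ j, b j := by
  classical
  have g := good_run hD hDnn hD0 b hb
  have hlenB : (BsL b).length = n := len_BsL b
  have hlencs : (csL D b).length = n := g.len_cs.trans hlenB
  have hlenps : (psL D b).length = n := g.len_ps.trans hlenB
  set pd : ℕ → ℝ := fun k => (psL D b).getD k 0 with hpd
  set zf : ℕ → ℝ := fun k => if h : k < n then z ((rankEquiv b).symm ⟨k, h⟩) else 0 with hzf
  set cf : ℕ → ℝ := fun k => (csL D b).getD k 0 with hcf
  -- price/click identity per bidder
  have hkey : ∀ j : Fin n, b j = pd (rankBy n b j) * psbClicks n D b j := by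
    intro j
    have hmul := g.mul (rankBy n b j) (by rw [hlenB]; exact rankBy_lt_n b j)
    have hBs : (BsL b).getD (rankBy n b j) 0 = b j := by
      rw [BsL, getD_BsL b (rankBy_lt_n b j), atRank_rankBy]
    rw [hBs] at hmul
    exact hmul
  have hcpos : ∀ j, 0 < psbClicks n D b j := clicks_pos hD hDnn hD0 b hb
  -- Abel comparison
  have habel : ∑ k ∈ Finset.range n, pd k * zf k ≤ ∑ k ∈ Finset.range n, pd k * cf k := by
    apply abel_le hn pd zf cf (fun m => ((DsL D).take m).sum)
    · intro k hk
      exact getD_anti g.ps_sorted (Nat.le_succ k) (by omega)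
    · have : n - 1 < (psL D b).length := by omega
      rw [hpd]
      have := g.ps_pos _ (List.getElem_mem this)
      rw [← getD_lt (by omega : n - 1 < (psL D b).length)] at this
      exact le_of_lt this
    · intro m hm
      have hre := sum_reindex_rank b (fun _ => (1:ℝ)) z m hm
      simp only [one_mul] at hre
      rw [← hre]
      have hc := card_rank_lt b m hm
      calc ∑ j ∈ Finset.univ.filter (fun j => rankBy n b j < m), z j
          ≤ ((DsL D).take (Finset.univ.filter (fun j => rankBy n b j < m)).card).sum := hz _
        _ = ((DsL D).take m).sum := by rw [hc]
    · intro k hk hcond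
      have heq := g.eqdrop k (by omega) (by
        rcases hcond with h | h
        · left; omega
        · right; exact h)
      rw [← sum_take_eq_range (csL D b) (k + 1) (by omega)]
      exact heq
  -- reindex both sides of habel to sums over bidders
  have hL : ∑ k ∈ Finset.range n, pd k * zf k
      = ∑ j, (b j / psbClicks n D b j) * z j := by
    have hre := sum_reindex_rank b pd z n (le_refl n)
    rw [Finset.filter_true_of_mem (fun j _ => rankBy_lt_n b j)] at hre
    rw [← hre]
    apply Finset.sum_congr rfl
    intro j _
    congr 1
    have := hkey j
    have hc := hcpos j
    field_simp
    linarith [hkey j]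
  have hR : ∑ k ∈ Finset.range n, pd k * cf k = ∑ j, b j := by
    have hre := sum_reindex_rank b pd (fun j => psbClicks n D b j) n (le_refl n)
    rw [Finset.filter_true_of_mem (fun j _ => rankBy_lt_n b j)] at hre
    have h1 : ∑ j, pd (rankBy n b j) * psbClicks n D b j = ∑ j, b j :=
      Finset.sum_congr rfl (fun j _ => (hkey j).symm)
    rw [← h1, hre]
    apply Finset.sum_congr rfl
    intro k hk
    rw [Finset.mem_range] at hk
    rw [dif_pos hk]
    congr 1
    show (csL D b).getD k 0 = psbClicks n D b ((rankEquiv b).symm ⟨k, hk⟩)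
    rw [clicks_eq_csL, rankBy_symm]
  rw [← hL, ← hR]
  exact habel

lemma clicks_mono (hn : 0 < n) (hD : StrictAnti D) (hDnn : ∀ j, 0 ≤ D j)
    (hD0 : ∀ (h : 0 < n), 0 < D ⟨0, h⟩)
    (b1 b2 : Fin n → ℝ) (hb1 : ∀ j, 0 < b1 j) (hb2 : ∀ j, 0 < b2 j) (i : Fin n)
    (hsame : ∀ j, j ≠ i → b1 j = b2 j) (hle : b1 i ≤ b2 i) :
    psbClicks n D b1 i ≤ psbClicks n D b2 i := by
  classical
  have hcpos : ∀ j, 0 < psbClicks n D b1 j := clicks_pos hD hDnn hD0 b1 hb1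
  have hdpos : ∀ j, 0 < psbClicks n D b2 j := clicks_pos hD hDnn hD0 b2 hb2
  set c := fun j => psbClicks n D b1 j with hc
  set d := fun j => psbClicks n D b2 j with hd
  have I1 : ∑ j, (b1 j / c j) * d j ≤ ∑ j, b1 j :=
    run_opt hn hD hDnn hD0 b1 hb1 d (fun S => run_feas hD hDnn hD0 b2 hb2 S)
  have I2 : ∑ j, (b2 j / d j) * c j ≤ ∑ j, b2 j :=
    run_opt hn hD hDnn hD0 b2 hb2 c (fun S => run_feas hD hDnn hD0 b1 hb1 S)
  by_contra hcon
  push_neg at hcon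
  set T := fun j => (b1 j / c j) * d j + (b2 j / d j) * c j - b1 j - b2 j with hT
  have hsumT : ∑ j, T j ≤ 0 := by
    have hsplit : ∑ j, T j = (∑ j, (b1 j / c j) * d j) + (∑ j, (b2 j / d j) * c j)
        - (∑ j, b1 j) - (∑ j, b2 j) := by
      rw [hT, Finset.sum_sub_distrib, Finset.sum_sub_distrib, Finset.sum_add_distrib]
    rw [hsplit]
    linarith
  have hTi : 0 < T i := by
    have hci : (0:ℝ) < c i := hcpos i
    have hdi : (0:ℝ) < d i := hdpos i
    have h1 : T i = (c i - d i) * (b2 i * c i - b1 i * d i) / (c i * d i) := by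
      simp only [hT]
      field_simp
      ring
    rw [h1]
    apply div_pos _ (mul_pos (hcpos i) (hdpos i))
    have h2 : 0 < c i - d i := by linarith
    have h3 : 0 < b2 i * c i - b1 i * d i := by nlinarith [hb1 i, hb2 i, hcpos i, hdpos i]
    exact mul_pos h2 h3
  have hTnn : ∀ j ∈ Finset.univ, 0 ≤ T j := by
    intro j _
    by_cases hj : j = i
    · subst hj
      exact le_of_lt hTi
    · have hbb := hsame j hj
      have hcj : (0:ℝ) < c j := hcpos j
      have hdj : (0:ℝ) < d j := hdpos j
      have h1 : T j = b1 j * (c j - d j)^2 / (c j * d j) := by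
        simp only [hT]
        rw [← hbb]
        field_simp
        ring
      rw [h1]
      apply div_nonneg _ (le_of_lt (mul_pos (hcpos j) (hdpos j)))
      exact mul_nonneg (le_of_lt (hb1 j)) (sq_nonneg _)
  have hpos : 0 < ∑ j, T j := Finset.sum_pos' hTnn ⟨i, Finset.mem_univ i, hTi⟩
  linarith

lemma getD_map_zero (l : List ℝ) (k : ℕ) : (l.map (fun _ => (0:ℝ))).getD k 0 = 0 := by
  by_cases h : k < l.length
  · rw [getD_lt (by simpa using h), List.getElem_map]
  · rw [List.getD_eq_default _ _ (by simpa using Nat.le_of_not_lt h)]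

lemma clicks_degenerate (hn : 0 < n) (hzero : ((DsL D).take n).sum ≤ 0)
    (b : Fin n → ℝ) (j : Fin n) : psbClicks n D b j = 0 := by
  rw [clicks_eq_csL]
  obtain ⟨m, hm⟩ : ∃ m, n = m + 1 := ⟨n - 1, by omega⟩
  have hBne : BsL b ≠ [] := by
    intro h
    have := len_BsL b
    rw [h] at this
    simp at this
    omega
  have hfuel : (BsL b).length = m + 1 := by rw [len_BsL b, hm]
  have hcs : csL D b = (BsL b).map (fun _ => 0) := by
    rw [csL, psbList, hfuel, psbAux, if_neg hBne, if_pos (by rw [hfuel, ← hm]; exact hzero)]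
  rw [hcs, getD_map_zero]

end PSBProof

open PSBProof in
/-- The multiple-slot, budgets-only price-setting mechanism is truthful:
whatever positive budgets the other bidders declare, declaring the true budget
`B i` gives bidder `i` utility at least that of any other declared budget
`B' > 0`. -/
theorem psb_multi_slot_truthful (n : ℕ) (D : Fin n → ℝ)
    (hD : StrictAnti D) (hD0 : ∀ j, 0 ≤ D j)
    (B : Fin n → ℝ) (hB : ∀ j, 0 < B j)
    (i : Fin n) (bud : Fin n → ℝ) (hbud : ∀ j, 0 < bud j)
    (B' : ℝ) (hB' : 0 < B') :
    psbUtil n D (B i) (Function.update bud i B') i ≤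
      psbUtil n D (B i) (Function.update bud i (B i)) i := by
  classical
  have hn : 0 < n := i.pos
  have hb1 : ∀ j, 0 < Function.update bud i B' j := by
    intro j
    by_cases h : j = i
    · subst h; simpa using hB'
    · simpa [Function.update_of_ne h] using hbud j
  have hb2 : ∀ j, 0 < Function.update bud i (B i) j := by
    intro j
    by_cases h : j = i
    · subst h; simpa using hB j
    · simpa [Function.update_of_ne h] using hbud j
  by_cases hD0pos : 0 < D ⟨0, hn⟩
  · -- main case
    have hD0' : ∀ (h : 0 < n), 0 < D ⟨0, h⟩ := fun _ => hD0pos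
    have hRHS : psbUtil n D (B i) (Function.update bud i (B i)) i
        = ((psbClicks n D (Function.update bud i (B i)) i : ℝ) : EReal) := by
      rw [psbUtil, if_pos (Or.inr (by rw [Function.update_self]))]
    rw [hRHS]
    by_cases hle : B' ≤ B i
    · have hLHS : psbUtil n D (B i) (Function.update bud i B') i
          = ((psbClicks n D (Function.update bud i B') i : ℝ) : EReal) := by
        rw [psbUtil, if_pos (Or.inr (by rw [Function.update_self]; exact hle))]
      rw [hLHS]
      rw [EReal.coe_le_coe_iff]
      apply clicks_mono hn hD hD0 hD0' _ _ hb1 hb2 i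
      · intro j hj
        rw [Function.update_of_ne hj, Function.update_of_ne hj]
      · rw [Function.update_self, Function.update_self]
        exact hle
    · rw [psbUtil]
      by_cases hc : psbClicks n D (Function.update bud i B') i = 0
      · rw [if_pos (Or.inl hc), hc]
        have := clicks_pos hD hD0 hD0' _ hb2 i
        exact_mod_cast EReal.coe_le_coe_iff.2 (le_of_lt this)
      · rw [if_neg (by
          intro hor
          rcases hor with h | h
          · exact hc h
          · rw [Function.update_self] at h
            exact hle h)]
        exact bot_le
  · -- degenerate: D 0 = 0
    have hD00 : D ⟨0, hn⟩ = 0 := le_antisymm (not_lt.1 hD0pos) (hD0 _)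
    have hDall : ∀ j, D j = 0 := by
      intro j
      rcases eq_or_ne j ⟨0, hn⟩ with rfl | hne
      · exact hD00
      · exfalso
        have hlt : (⟨0, hn⟩ : Fin n) < j := by
          rw [Fin.lt_def]
          exact Nat.pos_of_ne_zero (fun h => hne (Fin.ext h))
        have := hD hlt
        rw [hD00] at this
        exact absurd (hD0 j) (not_le.2 this)
    have hzero : ((DsL D).take n).sum ≤ 0 := by
      have : ∀ x ∈ (DsL D).take n, x = 0 := by
        intro x hx
        rcases List.mem_map.1 (List.mem_of_mem_take hx) with ⟨j, _, rfl⟩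
        exact hDall j
      rw [List.sum_eq_zero this]
    have hc1 : psbClicks n D (Function.update bud i B') i = 0 :=
      clicks_degenerate hn hzero _ i
    have hc2 : psbClicks n D (Function.update bud i (B i)) i = 0 :=
      clicks_degenerate hn hzero _ i
    rw [psbUtil, psbUtil, hc1, hc2]
    simp
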